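/- Let F be a number field, t ∈ F, and p a nonzero prime ideal of O_F with ν_p(t² + 3t + 9) < 0. Then the polynomial g(x;t) = x³ + t·x² − (t+3)·x + 1 splits into linear factors over the p-adic completion F_p of F. -/

import Mathlib

open NumberField IsDedekindDomain Polynomial Filter

local notation "ℤₘ₀" => WithZero (Multiplicative ℤ)

private lemma aux_exists_pow_lt (ε : ℤₘ₀) (hε : ε < 1) (γ : ℤₘ₀ˣ) :
    ∃ n : ℕ, 0 < n ∧ ε ^ n < (γ : ℤₘ₀) := by
  rcases eq_or_ne ε 0 with rfl | h0
  · exact ⟨1, one_pos, by simpa using zero_lt_iff.mpr (Units.ne_zero γ)⟩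
  · obtain ⟨x, rfl⟩ := WithZero.ne_zero_iff_exists.mp h0
    obtain ⟨g, hg⟩ := WithZero.ne_zero_iff_exists.mp (Units.ne_zero γ)
    have hx : Multiplicative.toAdd x ≤ -1 := by
      have h1 : x < 1 := by exact_mod_cast hε
      have h2 : Multiplicative.toAdd x < Multiplicative.toAdd (1 : Multiplicative ℤ) :=
        Multiplicative.toAdd_lt.mpr h1
      simp only [toAdd_one] at h2
      omega
    set n : ℕ := (-(Multiplicative.toAdd g)).toNat + 1 with hn
    refine ⟨n, Nat.succ_pos _, ?_⟩
    rw [← hg, ← WithZero.coe_pow, WithZero.coe_lt_coe, ← Multiplicative.toAdd_lt, toAdd_pow]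
    have h1 : (n : ℤ) * Multiplicative.toAdd x ≤ (n : ℤ) * (-1) :=
      mul_le_mul_of_nonneg_left hx (by positivity)
    have h2 : -(n : ℤ) < Multiplicative.toAdd g := by
      have h3 : (-(Multiplicative.toAdd g)) ≤ ((-(Multiplicative.toAdd g)).toNat : ℤ) :=
        Int.self_le_toNat _
      rw [hn]; push_cast; omega
    calc (n : ℤ) • Multiplicative.toAdd x = (n : ℤ) * Multiplicative.toAdd x := by
          simp [smul_eq_mul]
      _ ≤ -(n : ℤ) := by linarith
      _ < Multiplicative.toAdd g := h2

private theorem cubic_root_aux {K : Type*} [Field K] [Valued K ℤₘ₀] [CompleteSpace K]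
    {c d : K} (hc : Valued.v c < 1) (hd : Valued.v d < 1) :
    ∃ y : K, y ^ 3 - y ^ 2 - c * y - d = 0 ∧ Valued.v (y - 1) < 1 := by
  set ε : ℤₘ₀ := max (Valued.v c) (Valued.v d) with hεdef
  have hε1 : ε < 1 := max_lt hc hd
  have hcε : Valued.v c ≤ ε := le_max_left _ _
  have hdε : Valued.v d ≤ ε := le_max_right _ _
  rcases eq_or_ne ε 0 with hε0 | hε0
  · have hc0 : c = 0 := Valued.v.zero_iff.mp (le_antisymm (hcε.trans hε0.le) zero_le')
    have hd0 : d = 0 := Valued.v.zero_iff.mp (le_antisymm (hdε.trans hε0.le) zero_le')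
    refine ⟨1, by rw [hc0, hd0]; ring, ?_⟩
    simpa using zero_lt_one' ℤₘ₀
  set φ : K → K := fun z => 1 + (c * z + d) / z ^ 2 with hφ
  set y : ℕ → K := fun n => φ^[n] 1 with hy
  have hy0 : y 0 = 1 := rfl
  have hystep : ∀ n, y (n + 1) = φ (y n) := fun n => Function.iterate_succ_apply' φ n 1
  have hA : ∀ n, Valued.v (y n - 1) ≤ ε := by
    intro n
    induction n with
    | zero => rw [hy0]; simp
    | succ n ih =>
      have hv1 : Valued.v (y n) = 1 := by
        have h : y n = 1 + (y n - 1) := by ring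
        rw [h]; exact Valued.v.map_one_add_of_lt (lt_of_le_of_lt ih hε1)
      have hyn0 : y n ≠ 0 := by
        intro h; rw [h] at hv1; simp at hv1
      have h2 : y (n + 1) - 1 = (c * y n + d) / (y n) ^ 2 := by
        rw [hystep, hφ]; ring
      rw [h2, map_div₀, map_pow, hv1, one_pow, div_one]
      refine le_trans (Valued.v.map_add _ _) (max_le ?_ hdε)
      rw [Valuation.map_mul, hv1, mul_one]; exact hcε
  have hB : ∀ n, Valued.v (y n) = 1 := by
    intro n
    have h : y n = 1 + (y n - 1) := by ring
    rw [h]; exact Valued.v.map_one_add_of_lt (lt_of_le_of_lt (hA n) hε1)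
  have hBne : ∀ n, y n ≠ 0 := by
    intro n h; have := hB n; rw [h] at this; simp at this
  have key : ∀ w z : K, Valued.v (w - 1) ≤ ε → Valued.v (z - 1) ≤ ε →
      Valued.v (φ w - φ z) ≤ ε * Valued.v (w - z) := by
    intro w z hw hz
    have hvw : Valued.v w = 1 := by
      have h : w = 1 + (w - 1) := by ring
      rw [h]; exact Valued.v.map_one_add_of_lt (lt_of_le_of_lt hw hε1)
    have hvz : Valued.v z = 1 := by
      have h : z = 1 + (z - 1) := by ring
      rw [h]; exact Valued.v.map_one_add_of_lt (lt_of_le_of_lt hz hε1)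
    have hw0 : w ≠ 0 := by intro h; rw [h] at hvw; simp at hvw
    have hz0 : z ≠ 0 := by intro h; rw [h] at hvz; simp at hvz
    have hident : φ w - φ z = ((z - w) * (c * (w * z) + d * (z + w))) / (w ^ 2 * z ^ 2) := by
      rw [hφ]; field_simp; ring
    have hden : Valued.v (w ^ 2 * z ^ 2) = 1 := by
      rw [Valuation.map_mul, map_pow, map_pow, hvw, hvz]; simp
    have hnum : Valued.v (c * (w * z) + d * (z + w)) ≤ ε := by
      refine le_trans (Valued.v.map_add _ _) (max_le ?_ ?_)
      · rw [Valuation.map_mul, Valuation.map_mul, hvw, hvz]; simpa using hcε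
      · rw [Valuation.map_mul]
        have hzw : Valued.v (z + w) ≤ 1 := by
          refine le_trans (Valued.v.map_add _ _) ?_
          rw [hvw, hvz]; simp
        calc Valued.v d * Valued.v (z + w) ≤ Valued.v d * 1 := mul_le_mul_right hzw _
          _ = Valued.v d := mul_one _
          _ ≤ ε := hdε
    calc Valued.v (φ w - φ z)
        = Valued.v (z - w) * Valued.v (c * (w * z) + d * (z + w)) / Valued.v (w ^ 2 * z ^ 2) := by
          rw [hident, map_div₀, Valuation.map_mul]
      _ = Valued.v (w - z) * Valued.v (c * (w * z) + d * (z + w)) := by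
          rw [hden, div_one, Valued.v.map_sub_swap]
      _ ≤ Valued.v (w - z) * ε := mul_le_mul_right hnum _
      _ = ε * Valued.v (w - z) := mul_comm _ _
  have hD : ∀ n, Valued.v (y (n + 1) - y n) ≤ ε ^ (n + 1) := by
    intro n
    induction n with
    | zero => rw [hy0, pow_one]; exact hA 1
    | succ n ih =>
      have h := key (y (n + 1)) (y n) (hA (n + 1)) (hA n)
      rw [← hystep, ← hystep] at h
      refine le_trans h ?_
      calc ε * Valued.v (y (n + 1) - y n) ≤ ε * ε ^ (n + 1) := mul_le_mul_right ih _
        _ = ε ^ (n + 2) := (pow_succ' ε (n + 1)).symm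
  have hT : ∀ m n, m ≤ n → Valued.v (y n - y m) ≤ ε ^ (m + 1) := by
    intro m n h
    induction n, h using Nat.le_induction with
    | base => simp
    | succ n hmn ih =>
      have h2 : y (n + 1) - y m = (y (n + 1) - y n) + (y n - y m) := by ring
      rw [h2]
      refine le_trans (Valued.v.map_add _ _) (max_le (le_trans (hD n) ?_) ih)
      exact pow_le_pow_right_of_le_one' hε1.le (by omega)
  have hcauchy : CauchySeq y := by
    rw [(Valued.hasBasis_uniformity K ℤₘ₀).cauchySeq_iff]
    intro γ _
    obtain ⟨n₀, hn₀pos, hn₀⟩ := aux_exists_pow_lt ε hε1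
      (Units.map (MonoidWithZeroHom.ValueGroup₀.embedding (f := .ofClass (Valued.v (R := K)))) γ)
    simp only [Units.coe_map, MonoidHom.coe_coe] at hn₀
    refine ⟨n₀, fun m hm n hn => ?_⟩
    show Valued.v.restrict (y n - y m) < γ.1
    rw [Valuation.restrict_lt_iff_lt_embedding]
    rcases le_total m n with h | h
    · exact lt_of_le_of_lt (le_trans (hT m n h)
        (pow_le_pow_right_of_le_one' hε1.le (by omega))) hn₀
    · rw [Valued.v.map_sub_swap]
      exact lt_of_le_of_lt (le_trans (hT n m h)
        (pow_le_pow_right_of_le_one' hε1.le (by omega))) hn₀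
  obtain ⟨L, hL⟩ := cauchySeq_tendsto_of_complete hcauchy
  have hvL : Valued.v (L - 1) ≤ ε := by
    have hmem : {z : K | Valued.v (z - L) < ε} ∈ nhds L := by
      rw [Valued.mem_nhds]
      obtain ⟨a, ha⟩ : ∃ a : K, Valued.v a = ε := by
        rcases max_choice (Valued.v c) (Valued.v d) with h | h
        · exact ⟨c, by rw [hεdef, h]⟩
        · exact ⟨d, by rw [hεdef, h]⟩
      refine ⟨Units.mk0 (Valued.v.restrict a)
        (by rw [Ne, Valuation.restrict_eq_zero_iff, ha]; exact hε0), fun z hz => ?_⟩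
      have hz' : Valued.v.restrict (z - L) < Valued.v.restrict a := hz
      have h3 := (Valuation.restrict_lt_iff _).mp hz'
      rw [ha] at h3
      exact h3
    obtain ⟨n, hn⟩ := (hL.eventually_mem hmem).exists
    have h2 : L - 1 = (L - y n) + (y n - 1) := by ring
    rw [h2]
    refine le_trans (Valued.v.map_add _ _) (max_le ?_ (hA n))
    rw [Valued.v.map_sub_swap]
    exact le_of_lt hn
  have hroot : L ^ 3 - L ^ 2 - c * L - d = 0 := by
    have h1 : Tendsto (fun n => (y n) ^ 3 - (y n) ^ 2 - c * (y n) - d) atTop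
        (nhds (L ^ 3 - L ^ 2 - c * L - d)) :=
      (((hL.pow 3).sub (hL.pow 2)).sub (tendsto_const_nhds.mul hL)).sub tendsto_const_nhds
    have h2 : Tendsto (fun n => (y n) ^ 3 - (y n) ^ 2 - c * (y n) - d) atTop (nhds 0) := by
      rw [(Valued.hasBasis_nhds_zero K ℤₘ₀).tendsto_right_iff]
      intro γ _
      obtain ⟨n₀, hn₀pos, hn₀⟩ := aux_exists_pow_lt ε hε1
        (Units.map (MonoidWithZeroHom.ValueGroup₀.embedding (f := .ofClass (Valued.v (R := K)))) γ)
      simp only [Units.coe_map, MonoidHom.coe_coe] at hn₀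
      filter_upwards [eventually_ge_atTop n₀] with n hn
      have hident : (y n) ^ 3 - (y n) ^ 2 - c * y n - d = (y n) ^ 2 * (y n - y (n + 1)) := by
        rw [hystep, hφ]
        field_simp [hBne n]
        ring
      show Valued.v.restrict ((y n) ^ 3 - (y n) ^ 2 - c * y n - d) < γ.1
      rw [Valuation.restrict_lt_iff_lt_embedding]
      rw [hident, Valuation.map_mul, map_pow, hB n, one_pow, one_mul, Valued.v.map_sub_swap]
      exact lt_of_le_of_lt (le_trans (hD n)
        (pow_le_pow_right_of_le_one' hε1.le (by omega))) hn₀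
    exact tendsto_nhds_unique h1 h2
  exact ⟨L, hroot, lt_of_le_of_lt hvL hε1⟩

private lemma aux_id1 {K : Type*} [Field K] (T y : K) (hT0 : T ≠ 0) :
    T ^ 3 * (y ^ 3 - y ^ 2 - (T⁻¹ + 3 * T⁻¹ ^ 2) * y - T⁻¹ ^ 3)
      = -((-T * y) ^ 3 + T * (-T * y) ^ 2 - (T + 3) * (-T * y) + 1) := by
  field_simp [hT0]; ring

private lemma aux_id2 {K : Type*} [Field K] (T r : K) (hr0 : r ≠ 0) (hr1' : (1 : K) - r ≠ 0)
    (hg : r ^ 3 + T * r ^ 2 - (T + 3) * r + 1 = 0) :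
    r + (1 - r)⁻¹ + (r - 1) * r⁻¹ = -T := by
  field_simp; linear_combination -hg

private lemma aux_id3 {K : Type*} [Field K] (T r : K) (hr0 : r ≠ 0) (hr1' : (1 : K) - r ≠ 0)
    (hg : r ^ 3 + T * r ^ 2 - (T + 3) * r + 1 = 0) :
    r * (1 - r)⁻¹ + r * ((r - 1) * r⁻¹) + (1 - r)⁻¹ * ((r - 1) * r⁻¹) = -(T + 3) := by
  field_simp; linear_combination -hg

private lemma aux_id4 {K : Type*} [Field K] (r : K) (hr0 : r ≠ 0) (hr1' : (1 : K) - r ≠ 0) :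
    r * (1 - r)⁻¹ * ((r - 1) * r⁻¹) = -1 := by
  field_simp; ring

/-- Let `F` be a number field, `t ∈ F`, and `p` a nonzero prime of `O_F` with
`ν_p(t² + 3t + 9) < 0` (expressed multiplicatively: the `p`-adic valuation of
`t² + 3t + 9` is greater than `1`). Then `g(x;t) = x³ + t·x² − (t+3)·x + 1` splits into
linear factors over the `p`-adic completion `F_p` of `F`. -/
theorem stmt_11 (F : Type*) [Field F] [NumberField F] (t : F)
    (p : HeightOneSpectrum (𝓞 F))
    (hv : 1 < p.valuation F (t ^ 2 + 3 * t + 9)) :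
    Polynomial.Splits (Polynomial.map (RingHom.id (p.adicCompletion F))
      (X ^ 3 + C (algebraMap F (p.adicCompletion F) t) * X ^ 2
        - C (algebraMap F (p.adicCompletion F) t + 3) * X + 1)) := by
  classical
  -- Step 1: 1 < v_p(t)
  have h3F : p.valuation F (3 : F) ≤ 1 := by
    rw [show (3 : F) = algebraMap (𝓞 F) F 3 from (map_ofNat _ 3).symm]
    exact p.valuation_le_one 3
  have h9F : p.valuation F (9 : F) ≤ 1 := by
    rw [show (9 : F) = algebraMap (𝓞 F) F 9 from (map_ofNat _ 9).symm]
    exact p.valuation_le_one 9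
  have hvt : 1 < p.valuation F t := by
    by_contra h
    push_neg at h
    have h1 : p.valuation F (t ^ 2) ≤ 1 := by
      rw [map_pow]; exact pow_le_one' h 2
    have h2 : p.valuation F (3 * t) ≤ 1 := by
      rw [Valuation.map_mul]; exact mul_le_one' h3F h
    have h4 : p.valuation F (t ^ 2 + 3 * t + 9) ≤ 1 :=
      (p.valuation F).map_add_le ((p.valuation F).map_add_le h1 h2) h9F
    exact absurd hv (not_lt.mpr h4)
  set Kv := p.adicCompletion F with hKv
  set T : Kv := algebraMap F Kv t with hTdef
  have hvT : 1 < Valued.v T := by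
    have heq : Valued.v T = p.valuation F t := p.valuedAdicCompletion_eq_valuation' t
    rw [heq]; exact hvt
  have hT0 : T ≠ 0 := by
    intro h
    rw [h, map_zero] at hvT
    exact not_lt_zero' hvT
  have hu : Valued.v (T⁻¹) < 1 := ((Valued.v).one_lt_val_iff hT0).mp hvT
  have hu1 : Valued.v (T⁻¹) ≤ 1 := hu.le
  have h3K : Valued.v (3 : Kv) ≤ 1 := by
    rw [show (3 : Kv) = algebraMap F Kv (3 : F) from (map_ofNat _ 3).symm,
      show Valued.v (algebraMap F Kv (3 : F)) = p.valuation F (3 : F) from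
        p.valuedAdicCompletion_eq_valuation' (3 : F)]
    exact h3F
  -- the coefficients c and d
  have hc : Valued.v (T⁻¹ + 3 * T⁻¹ ^ 2) < 1 := by
    refine lt_of_le_of_lt (le_trans ((Valued.v).map_add _ _) (max_le le_rfl ?_)) hu
    rw [Valuation.map_mul, map_pow]
    calc Valued.v (3 : Kv) * Valued.v (T⁻¹) ^ 2
        ≤ 1 * Valued.v (T⁻¹) ^ 2 := mul_le_mul_left h3K _
      _ = Valued.v (T⁻¹) * Valued.v (T⁻¹) := by rw [one_mul, sq]
      _ ≤ 1 * Valued.v (T⁻¹) := mul_le_mul_left hu1 _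
      _ = Valued.v (T⁻¹) := one_mul _
  have hd : Valued.v (T⁻¹ ^ 3) < 1 := by
    rw [map_pow]
    calc Valued.v (T⁻¹) ^ 3 ≤ Valued.v (T⁻¹) ^ 1 :=
          pow_le_pow_right_of_le_one' hu1 (by omega)
      _ = Valued.v (T⁻¹) := pow_one _
      _ < 1 := hu
  obtain ⟨y, hy, hy1⟩ := cubic_root_aux hc hd
  have hvy : Valued.v y = 1 := by
    have h : y = 1 + (y - 1) := by ring
    rw [h]; exact (Valued.v).map_one_add_of_lt hy1
  have hy0 : y ≠ 0 := by intro h; rw [h] at hvy; simp at hvy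
  obtain ⟨r, hr⟩ : ∃ r' : Kv, r' = -T * y := ⟨-T * y, rfl⟩
  have hg : r ^ 3 + T * r ^ 2 - (T + 3) * r + 1 = 0 := by
    have hkey : T ^ 3 * (y ^ 3 - y ^ 2 - (T⁻¹ + 3 * T⁻¹ ^ 2) * y - T⁻¹ ^ 3)
        = -(r ^ 3 + T * r ^ 2 - (T + 3) * r + 1) := by
      rw [hr]; exact aux_id1 T y hT0
    rw [hy, mul_zero] at hkey
    linear_combination hkey
  have hr0 : r ≠ 0 := by
    rw [hr]; exact mul_ne_zero (neg_ne_zero.mpr hT0) hy0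
  have hr1 : r ≠ 1 := by
    intro h
    rw [h] at hg
    exact one_ne_zero (α := Kv) (by linear_combination -hg)
  have hr1' : (1 : Kv) - r ≠ 0 := sub_ne_zero.mpr (Ne.symm hr1)
  obtain ⟨r₂, hr₂⟩ : ∃ r' : Kv, r' = (1 - r)⁻¹ := ⟨(1 - r)⁻¹, rfl⟩
  obtain ⟨r₃, hr₃⟩ : ∃ r' : Kv, r' = (r - 1) * r⁻¹ := ⟨(r - 1) * r⁻¹, rfl⟩
  have e1 : r + r₂ + r₃ = -T := by
    rw [hr₂, hr₃]; exact aux_id2 T r hr0 hr1' hg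
  have e2 : r * r₂ + r * r₃ + r₂ * r₃ = -(T + 3) := by
    rw [hr₂, hr₃]; exact aux_id3 T r hr0 hr1' hg
  have e3 : r * r₂ * r₃ = -1 := by
    rw [hr₂, hr₃]; exact aux_id4 r hr0 hr1'
  have E1 : (C r + C r₂ + C r₃ : Kv[X]) = -C T := by
    rw [← C_add, ← C_add, e1, C_neg]
  have E2 : (C r * C r₂ + C r * C r₃ + C r₂ * C r₃ : Kv[X]) = -C (T + 3) := by
    rw [← C_mul, ← C_mul, ← C_mul, ← C_add, ← C_add, e2, C_neg]
  have E3 : (C r * C r₂ * C r₃ : Kv[X]) = -1 := by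
    rw [← C_mul, ← C_mul, e3, C_neg, C_1]
  have key : (X : Kv[X]) ^ 3 + C T * X ^ 2 - C (T + 3) * X + 1
      = (X - C r) * (X - C r₂) * (X - C r₃) := by
    linear_combination (X : Kv[X]) ^ 2 * E1 - (X : Kv[X]) * E2 + E3
  rw [Polynomial.map_id, key]
  exact ((Splits.X_sub_C _).mul (Splits.X_sub_C _)).mul (Splits.X_sub_C _)
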